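/- Let n, m ≥ 1, ℓ ∈ {1,…,n}, k ∈ {1,…,m}, and β ∈ (0,1). Then the β-quantile of the k-th order statistic of m i.i.d. Beta(ℓ, n−ℓ+1) random variables satisfies F_{U_(ℓ:n,k:m)}⁻¹(β) ≥ F_{U_(ℓ:n)}⁻¹( k/(m+1) − sqrt(log(1/β)/(2(m+2))) ). -/

import Mathlib

open MeasureTheory ProbabilityTheory Set

/-- The `r`-th smallest value (order statistic, 1-indexed, ties with multiplicity)
of a finite real vector. -/
noncomputable def orderStat {N : ℕ} (S : Fin N → ℝ) (r : ℕ) : ℝ :=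
  ((Multiset.ofList (List.ofFn S)).sort (· ≤ ·)).getD (r - 1) 0

/-- Product of `N` i.i.d. uniform distributions on `[0,1]`. -/
noncomputable def unifPi (N : ℕ) : Measure (Fin N → ℝ) :=
  Measure.pi fun _ => volume.restrict (Icc (0:ℝ) 1)

/-- The Beta(r, N-r+1) distribution: the law of the `r`-th order statistic of
`N` i.i.d. uniform random variables on `[0,1]`. -/
noncomputable def betaOS (N r : ℕ) : Measure ℝ :=
  Measure.map (fun u => orderStat u r) (unifPi N)

/-- The cdf of the Beta(r, N-r+1) distribution (cdf of `U_(r:N)`). -/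
noncomputable def betaCDF (N r : ℕ) (t : ℝ) : ℝ := (betaOS N r (Iic t)).toReal

/-- Generalized inverse (quantile function) of a cdf. -/
noncomputable def genInv (F : ℝ → ℝ) (p : ℝ) : ℝ := sInf {x | p ≤ F x}

/-- Quantile function of the Beta(r, N-r+1) distribution. -/
noncomputable def betaQuantile (N r : ℕ) (p : ℝ) : ℝ := genInv (betaCDF N r) p

/-- Quantile-of-quantiles: the `k`-th smallest of the `m` within-group `ℓ`-th
order statistics of an `n × m` array. -/
noncomputable def qqStat {n m : ℕ} (ℓ k : ℕ) (Z : Fin n → Fin m → ℝ) : ℝ :=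
  orderStat (fun j => orderStat (fun i => Z i j) ℓ) k

/-- Product of `n × m` i.i.d. uniform distributions on `[0,1]`. -/
noncomputable def unifPi2 (n m : ℕ) : Measure (Fin n → Fin m → ℝ) :=
  Measure.pi fun _ => Measure.pi fun _ => volume.restrict (Icc (0:ℝ) 1)

/-- The law of `U_(ℓ:n, k:m)`, the `k`-th order statistic of the `m` within-group
`ℓ`-th order statistics of an `n × m` array of i.i.d. uniform variables
(equivalently, of `m` i.i.d. Beta(ℓ, n-ℓ+1) variables). -/
noncomputable def betaBetaOS (n m ℓ k : ℕ) : Measure ℝ :=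
  Measure.map (qqStat ℓ k) (unifPi2 n m)

/-- The auxiliary function `g(t) = sup_{δ ∈ (0, min{t,1-t})} (t-δ)/√(log(1/δ))`. -/
noncomputable def gFun (t : ℝ) : ℝ :=
  sSup ((fun δ => (t - δ) / Real.sqrt (Real.log (1/δ))) '' Ioo 0 (min t (1 - t)))

/-- The cdf of the Poisson-Binomial distribution with parameter vector `u`,
evaluated at the integer `r`. -/
noncomputable def pbCDF {m : ℕ} (u : Fin m → ℝ) (r : ℕ) : ℝ :=
  ∑ A ∈ Finset.univ.powerset.filter (fun A : Finset (Fin m) => A.card ≤ r),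
    (∏ j ∈ A, u j) * ∏ j ∈ Aᶜ, (1 - u j)

theorem sorted_getD_le_iff (l : List ℝ) (hl : l.Pairwise (· ≤ ·)) (i : ℕ) (hi : i < l.length) (x : ℝ) :
    l.getD i 0 ≤ x ↔ i < l.countP (fun a => decide (a ≤ x)) := by
  rw [List.getD_eq_getElem l 0 hi]
  have key : ∀ j (hj : j < l.length), j ≤ i → l[i] ≤ x → l[j] ≤ x := by
    intro j hj hji h
    exact le_trans (hl.rel_get_of_le (by simpa using hji)) h
  constructor
  · intro h
    have h1 : l = l.take (i+1) ++ l.drop (i+1) := (List.take_append_drop _ _).symm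
    have h2 : (l.take (i+1)).countP (fun a => decide (a ≤ x)) = (l.take (i+1)).length := by
      rw [List.countP_eq_length]
      intro a ha
      obtain ⟨j, hj, rfl⟩ := List.mem_iff_getElem.mp ha
      have hjl : j < l.length := lt_of_lt_of_le hj (by simp [List.length_take])
      have hji : j ≤ i := by have := (List.length_take : (l.take (i+1)).length = _); omega
      rw [List.getElem_take]
      exact decide_eq_true (key j hjl hji h)
    have h3 : (l.take (i+1)).length = i + 1 := by
      rw [List.length_take]; omega
    calc i < i + 1 := Nat.lt_succ_self i
    _ = (l.take (i+1)).countP (fun a => decide (a ≤ x)) := by rw [h2, h3]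
    _ ≤ l.countP (fun a => decide (a ≤ x)) := by
        conv_rhs => rw [h1]
        rw [List.countP_append]; omega
  · intro h
    by_contra hx
    push_neg at hx
    have hdrop : (l.drop i).countP (fun a => decide (a ≤ x)) = 0 := by
      rw [List.countP_eq_zero]
      intro a ha
      obtain ⟨j, hj, rfl⟩ := List.mem_iff_getElem.mp ha
      have hij : i + j < l.length := by
        have := (List.length_drop : (l.drop i).length = _) ▸ hj; omega
      rw [List.getElem_drop]
      simp only [decide_eq_true_eq, not_le]
      calc x < l[i] := hx
      _ ≤ l[i + j] := hl.rel_get_of_le (by simpa using Nat.le_add_right i j)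
    have h1 : l = l.take i ++ l.drop i := (List.take_append_drop _ _).symm
    have : l.countP (fun a => decide (a ≤ x)) ≤ i := by
      conv_lhs => rw [h1]
      rw [List.countP_append, hdrop]
      have := List.countP_le_length (l := l.take i) (p := fun a => decide (a ≤ x))
      rw [List.length_take] at this
      omega
    omega

theorem orderStat_le_iff {N : ℕ} (S : Fin N → ℝ) (r : ℕ) (hr1 : 1 ≤ r) (hrN : r ≤ N) (x : ℝ) :
    orderStat S r ≤ x ↔ r ≤ (Finset.univ.filter fun i => S i ≤ x).card := by
  set l := ((Multiset.ofList (List.ofFn S)).sort (· ≤ ·)) with hldef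
  have hlen : l.length = N := by
    rw [hldef, Multiset.length_sort]
    simp
  have hsort : l.Pairwise (· ≤ ·) := Multiset.pairwise_sort _ _
  have hcount : l.countP (fun a => decide (a ≤ x)) =
      (Finset.univ.filter fun i => S i ≤ x).card := by
    have h1 : Multiset.countP (fun a => decide (a ≤ x)) (Multiset.ofList l)
        = Multiset.countP (fun a => decide (a ≤ x)) (Multiset.ofList (List.ofFn S)) := by
      rw [hldef, Multiset.sort_eq]
    have h2 : l.countP (fun a => decide (a ≤ x)) = (List.ofFn S).countP (fun a => decide (a ≤ x)) := by
      simpa using h1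
    rw [h2]
    have h3 : (Multiset.ofList (List.ofFn S)) = Multiset.map S Finset.univ.val := by
      rw [Fin.univ_val_map]
    have h5 : List.countP (fun a => decide (a ≤ x)) (List.ofFn S)
        = Multiset.countP (fun a => decide (a ≤ x)) (Multiset.ofList (List.ofFn S)) := by
      simp [Multiset.coe_countP]
    rw [h5, h3, Multiset.countP_map]
    rw [Finset.card_def, Finset.filter_val]
    congr 1
    apply Multiset.filter_congr
    intro y _
    simp
  rw [show orderStat S r = l.getD (r-1) 0 from rfl]
  rw [sorted_getD_le_iff l hsort (r-1) (by omega) x, hcount]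
  omega

theorem measurable_orderStat {N : ℕ} (r : ℕ) (hr1 : 1 ≤ r) (hrN : r ≤ N) :
    Measurable (fun S : Fin N → ℝ => orderStat S r) := by
  apply measurable_of_Iic
  intro x
  have : (fun S : Fin N → ℝ => orderStat S r) ⁻¹' Iic x
      = ⋃ T ∈ (Finset.univ.filter fun T : Finset (Fin N) => r ≤ T.card),
          ⋂ i ∈ T, {S : Fin N → ℝ | S i ≤ x} := by
    ext S
    simp only [mem_preimage, mem_Iic, Set.mem_iUnion, Set.mem_iInter, Finset.mem_filter,
      Finset.mem_univ, true_and, mem_setOf_eq]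
    rw [orderStat_le_iff S r hr1 hrN x]
    constructor
    · intro h
      exact ⟨Finset.univ.filter fun i => S i ≤ x, h, fun i hi => (Finset.mem_filter.mp hi).2⟩
    · rintro ⟨T, hT, h⟩
      calc r ≤ T.card := hT
      _ ≤ (Finset.univ.filter fun i => S i ≤ x).card := by
          apply Finset.card_le_card
          intro i hi
          exact Finset.mem_filter.mpr ⟨Finset.mem_univ i, h i hi⟩
  rw [this]
  apply MeasurableSet.biUnion (Finset.univ.filter fun T : Finset (Fin N) => r ≤ T.card).countable_toSet
  intro T _
  apply MeasurableSet.biInter T.countable_toSet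
  intro i _
  exact measurableSet_le (measurable_pi_apply i) measurable_const

theorem orderStat_mem_Icc {N : ℕ} (S : Fin N → ℝ) (r : ℕ) (hr1 : 1 ≤ r) (hrN : r ≤ N)
    (hS : ∀ i, S i ∈ Icc (0:ℝ) 1) : orderStat S r ∈ Icc (0:ℝ) 1 := by
  set l := ((Multiset.ofList (List.ofFn S)).sort (· ≤ ·)) with hldef
  have hlen : l.length = N := by rw [hldef, Multiset.length_sort]; simp
  have hmem : orderStat S r ∈ l := by
    rw [show orderStat S r = l.getD (r-1) 0 from rfl, List.getD_eq_getElem l 0 (by omega)]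
    exact List.getElem_mem _
  have : orderStat S r ∈ Multiset.ofList (List.ofFn S) := by
    rw [← Multiset.mem_sort (· ≤ ·)]; exact hmem
  rw [Multiset.mem_coe, List.mem_ofFn] at this
  obtain ⟨i, hi⟩ := this
  exact hi ▸ hS i

instance unifProb : IsProbabilityMeasure (volume.restrict (Icc (0:ℝ) 1)) := by
  constructor
  rw [Measure.restrict_apply_univ]
  simp

instance unifPiProb (N : ℕ) : IsProbabilityMeasure (unifPi N) := by
  unfold unifPi; infer_instance

theorem betaCDF_eq_sum (m k : ℕ) (hk1 : 1 ≤ k) (hkm : k ≤ m) (x : ℝ)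
    (hx0 : 0 ≤ x) (hx1 : x ≤ 1) :
    betaCDF m k x = ∑ T ∈ (Finset.univ.filter fun T : Finset (Fin m) => k ≤ T.card),
      x ^ T.card * (1 - x) ^ (m - T.card) := by
  have hmeas := measurable_orderStat (N := m) k hk1 hkm
  have hmap : betaOS m k (Iic x) = unifPi m ((fun u => orderStat u k) ⁻¹' Iic x) :=
    Measure.map_apply hmeas measurableSet_Iic
  set 𝒯 := (Finset.univ.filter fun T : Finset (Fin m) => k ≤ T.card) with h𝒯
  set A : Finset (Fin m) → Set (Fin m → ℝ) :=
    fun T => Set.pi univ (fun j => if j ∈ T then Iic x else Ioi x) with hA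
  have hAmem : ∀ (T : Finset (Fin m)) (u : Fin m → ℝ),
      u ∈ A T ↔ (Finset.univ.filter fun i => u i ≤ x) = T := by
    intro T u
    simp only [hA, Set.mem_pi, Set.mem_univ, true_imp_iff]
    constructor
    · intro h
      ext i
      simp only [Finset.mem_filter, Finset.mem_univ, true_and]
      constructor
      · intro hi
        by_contra hiT
        have := h i
        rw [if_neg hiT] at this
        exact absurd hi (not_le.mpr this)
      · intro hi
        have := h i
        rwa [if_pos hi] at this
    · intro h i
      by_cases hi : i ∈ T
      · rw [if_pos hi]
        have : i ∈ Finset.univ.filter fun i => u i ≤ x := h ▸ hi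
        exact (Finset.mem_filter.mp this).2
      · rw [if_neg hi]
        have : i ∉ Finset.univ.filter fun i => u i ≤ x := h ▸ hi
        simpa using this
  have hE : (fun u => orderStat u k) ⁻¹' Iic x = ⋃ T ∈ 𝒯, A T := by
    ext u
    simp only [mem_preimage, mem_Iic, Set.mem_iUnion, h𝒯, Finset.mem_filter, Finset.mem_univ,
      true_and]
    rw [orderStat_le_iff u k hk1 hkm x]
    constructor
    · intro h
      exact ⟨_, h, (hAmem _ u).mpr rfl⟩
    · rintro ⟨T, hT, hu⟩
      rw [hAmem T u] at hu
      rw [hu]; exact hT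
  have hAmeas : ∀ T : Finset (Fin m), MeasurableSet (A T) := by
    intro T
    apply MeasurableSet.univ_pi
    intro j
    by_cases hj : j ∈ T
    · rw [if_pos hj]; exact measurableSet_Iic
    · rw [if_neg hj]; exact measurableSet_Ioi
  have hdisj : (↑𝒯 : Set (Finset (Fin m))).PairwiseDisjoint A := by
    intro T1 _ T2 _ hne
    rw [Function.onFun, Set.disjoint_left]
    intro u h1 h2
    rw [hAmem] at h1 h2
    exact hne (by rw [← h1, ← h2])
  have hmu : ∀ T : Finset (Fin m), unifPi m (A T)
      = ENNReal.ofReal x ^ T.card * ENNReal.ofReal (1 - x) ^ (m - T.card) := by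
    intro T
    rw [hA]
    rw [show unifPi m = Measure.pi fun _ => volume.restrict (Icc (0:ℝ) 1) from rfl]
    rw [Measure.pi_pi]
    have hIic : volume.restrict (Icc (0:ℝ) 1) (Iic x) = ENNReal.ofReal x := by
      rw [Measure.restrict_apply measurableSet_Iic]
      have : Iic x ∩ Icc (0:ℝ) 1 = Icc 0 x := by
        ext y
        simp only [mem_inter_iff, mem_Iic, mem_Icc]
        constructor
        · rintro ⟨h1, h2, h3⟩; exact ⟨h2, h1⟩
        · rintro ⟨h1, h2⟩; exact ⟨h2, h1, le_trans h2 hx1⟩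
      rw [this, Real.volume_Icc]
      norm_num
    have hIoi : volume.restrict (Icc (0:ℝ) 1) (Ioi x) = ENNReal.ofReal (1 - x) := by
      rw [Measure.restrict_apply measurableSet_Ioi]
      have : Ioi x ∩ Icc (0:ℝ) 1 = Ioc x 1 := by
        ext y
        simp only [mem_inter_iff, mem_Ioi, mem_Icc, mem_Ioc]
        constructor
        · rintro ⟨h1, h2, h3⟩; exact ⟨h1, h3⟩
        · rintro ⟨h1, h2⟩; exact ⟨h1, le_trans hx0 (le_of_lt h1), h2⟩
      rw [this, Real.volume_Ioc]
    calc ∏ j : Fin m, volume.restrict (Icc (0:ℝ) 1) (if j ∈ T then Iic x else Ioi x)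
        = ∏ j : Fin m, (if j ∈ T then ENNReal.ofReal x else ENNReal.ofReal (1 - x)) := by
          apply Finset.prod_congr rfl
          intro j _
          by_cases hj : j ∈ T
          · rw [if_pos hj, if_pos hj, hIic]
          · rw [if_neg hj, if_neg hj, hIoi]
    _ = ENNReal.ofReal x ^ T.card * ENNReal.ofReal (1 - x) ^ (m - T.card) := by
        rw [← Finset.prod_sdiff (Finset.subset_univ T)]
        have e1 : (∏ j ∈ T, if j ∈ T then ENNReal.ofReal x else ENNReal.ofReal (1-x))
            = ENNReal.ofReal x ^ T.card := by
          rw [Finset.prod_congr rfl fun j hj => if_pos hj, Finset.prod_const]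
        have e2 : (∏ j ∈ Finset.univ \ T, if j ∈ T then ENNReal.ofReal x else ENNReal.ofReal (1-x))
            = ENNReal.ofReal (1-x) ^ (m - T.card) := by
          rw [Finset.prod_congr rfl fun j hj => if_neg (Finset.mem_sdiff.mp hj).2,
            Finset.prod_const, Finset.card_sdiff_of_subset (Finset.subset_univ T), Finset.card_univ,
            Fintype.card_fin]
        rw [e1, e2, mul_comm]
  have hfin : ∀ T ∈ 𝒯, unifPi m (A T) ≠ ⊤ := by
    intro T _
    rw [hmu T]
    exact ENNReal.mul_ne_top (ENNReal.pow_ne_top ENNReal.ofReal_ne_top)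
      (ENNReal.pow_ne_top ENNReal.ofReal_ne_top)
  have hsum : unifPi m ((fun u => orderStat u k) ⁻¹' Iic x) = ∑ T ∈ 𝒯, unifPi m (A T) := by
    rw [hE]
    exact measure_biUnion_finset hdisj fun T _ => hAmeas T
  unfold betaCDF
  rw [show betaOS m k = Measure.map (fun u => orderStat u k) (unifPi m) from rfl] at *
  rw [hmap, hsum, ENNReal.toReal_sum hfin]
  apply Finset.sum_congr rfl
  intro T _
  rw [hmu T, ENNReal.toReal_mul, ENNReal.toReal_pow, ENNReal.toReal_pow,
    ENNReal.toReal_ofReal hx0, ENNReal.toReal_ofReal (by linarith)]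

theorem bernoulli_mgf_bound (p t : ℝ) (hp0 : 0 ≤ p) (hp1 : p ≤ 1) (ht : 0 ≤ t) :
    1 - p + p * Real.exp t ≤ Real.exp (p * t + t ^ 2 / 8) := by
  set D : ℝ → ℝ := fun s => 1 - p + p * Real.exp s with hD
  have hDpos : ∀ s, 0 < D s := by
    intro s
    rcases lt_or_eq_of_le hp1 with h | h
    · have : 0 ≤ p * Real.exp s := mul_nonneg hp0 (Real.exp_pos s).le
      simp only [hD]; linarith
    · simp only [hD, h]
      simpa using Real.exp_pos s
  have hDderiv : ∀ s, HasDerivAt D (p * Real.exp s) s := by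
    intro s
    exact ((Real.hasDerivAt_exp s).const_mul p).const_add (1 - p)
  set g : ℝ → ℝ := fun s => p + s / 4 - p * Real.exp s / D s with hg
  have hgderiv : ∀ s, HasDerivAt g (1 / 4 - p * Real.exp s * (1 - p) / (D s) ^ 2) s := by
    intro s
    have h1 : HasDerivAt (fun s => p * Real.exp s / D s)
        ((p * Real.exp s * D s - p * Real.exp s * (p * Real.exp s)) / (D s) ^ 2) s :=
      ((Real.hasDerivAt_exp s).const_mul p).div (hDderiv s) (hDpos s).ne'
    have h2 : HasDerivAt (fun s => p + s / 4) (1 / 4) s := by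
      simpa using ((hasDerivAt_id s).div_const 4).const_add p
    have h3 := h2.sub h1
    refine h3.congr_deriv ?_
    have : D s = 1 - p + p * Real.exp s := rfl
    rw [this]
    ring
  have hg'' : ∀ s, 0 ≤ 1 / 4 - p * Real.exp s * (1 - p) / (D s) ^ 2 := by
    intro s
    rw [sub_nonneg, div_le_iff₀ (pow_pos (hDpos s) 2)]
    have : D s = 1 - p + p * Real.exp s := rfl
    nlinarith [sq_nonneg ((1 - p) - p * Real.exp s), Real.exp_pos s]
  have hg0 : g 0 = 0 := by
    simp only [hg, hD]
    norm_num
  have hgmono : MonotoneOn g (Set.Ici 0) := by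
    apply monotoneOn_of_deriv_nonneg (convex_Ici 0)
    · exact fun s _ => ((hgderiv s).differentiableAt.continuousAt).continuousWithinAt
    · exact fun s _ => (hgderiv s).differentiableAt.differentiableWithinAt
    · intro s _
      rw [(hgderiv s).deriv]
      exact hg'' s
  have hgnonneg : ∀ s, 0 ≤ s → 0 ≤ g s := by
    intro s hs
    rw [← hg0]
    exact hgmono Set.self_mem_Ici hs hs
  set ψ : ℝ → ℝ := fun s => p * s + s ^ 2 / 8 - Real.log (D s) with hψ
  have hψderiv : ∀ s, HasDerivAt ψ (g s) s := by
    intro s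
    have h1 : HasDerivAt (fun s => Real.log (D s)) (p * Real.exp s / D s) s :=
      (hDderiv s).log (hDpos s).ne'
    have h2 : HasDerivAt (fun s => p * s + s ^ 2 / 8) (p + s / 4) s := by
      have := ((hasDerivAt_pow 2 s).div_const 8).const_add 0
      have h3 : HasDerivAt (fun s : ℝ => p * s) p s := by
        simpa using (hasDerivAt_id s).const_mul p
      refine (h3.add ((hasDerivAt_pow 2 s).div_const 8)).congr_deriv ?_
      rw [show (2:ℕ) - 1 = 1 from rfl]
      push_cast
      ring
    exact h2.sub h1
  have hψ0 : ψ 0 = 0 := by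
    simp only [hψ, hD]
    norm_num
  have hψmono : MonotoneOn ψ (Set.Ici 0) := by
    apply monotoneOn_of_deriv_nonneg (convex_Ici 0)
    · exact fun s _ => ((hψderiv s).differentiableAt.continuousAt).continuousWithinAt
    · exact fun s _ => (hψderiv s).differentiableAt.differentiableWithinAt
    · intro s hs
      rw [(hψderiv s).deriv]
      exact hgnonneg s (le_of_lt (by simpa using hs))
  have hψt : 0 ≤ ψ t := by
    rw [← hψ0]
    exact hψmono Set.self_mem_Ici ht ht
  have : Real.log (D t) ≤ p * t + t ^ 2 / 8 := by
    simp only [hψ] at hψt; linarith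
  calc D t = Real.exp (Real.log (D t)) := (Real.exp_log (hDpos t)).symm
  _ ≤ Real.exp (p * t + t ^ 2 / 8) := Real.exp_le_exp.mpr this

theorem unifPi_goodSet (N : ℕ) : unifPi N (Set.pi univ fun _ : Fin N => Icc (0:ℝ) 1) = 1 := by
  rw [show unifPi N = Measure.pi fun _ => volume.restrict (Icc (0:ℝ) 1) from rfl, Measure.pi_pi]
  simp [Measure.restrict_apply, Real.volume_Icc]

theorem unifPi_goodSet_compl (N : ℕ) :
    unifPi N (Set.pi univ fun _ : Fin N => Icc (0:ℝ) 1)ᶜ = 0 := by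
  have hms : MeasurableSet (Set.pi univ fun _ : Fin N => Icc (0:ℝ) 1) :=
    MeasurableSet.univ_pi fun _ => measurableSet_Icc
  rw [measure_compl hms (measure_ne_top _ _), unifPi_goodSet, measure_univ, tsub_self]

theorem betaCDF_neg (N r : ℕ) (hr1 : 1 ≤ r) (hrN : r ≤ N) (x : ℝ) (hx : x < 0) :
    betaCDF N r x = 0 := by
  unfold betaCDF betaOS
  rw [Measure.map_apply (measurable_orderStat r hr1 hrN) measurableSet_Iic]
  have hsub : (fun u : Fin N → ℝ => orderStat u r) ⁻¹' Iic x
      ⊆ (Set.pi univ fun _ : Fin N => Icc (0:ℝ) 1)ᶜ := by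
    intro u hu
    simp only [mem_preimage, mem_Iic] at hu
    intro hg
    have : orderStat u r ∈ Icc (0:ℝ) 1 :=
      orderStat_mem_Icc u r hr1 hrN fun i => hg i (mem_univ i)
    linarith [this.1]
  have := measure_mono (μ := unifPi N) hsub
  rw [unifPi_goodSet_compl] at this
  simp [le_antisymm this zero_le]

theorem betaCDF_one (N r : ℕ) (hr1 : 1 ≤ r) (hrN : r ≤ N) : betaCDF N r 1 = 1 := by
  unfold betaCDF betaOS
  rw [Measure.map_apply (measurable_orderStat r hr1 hrN) measurableSet_Iic]
  have hsub : (Set.pi univ fun _ : Fin N => Icc (0:ℝ) 1)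
      ⊆ (fun u : Fin N → ℝ => orderStat u r) ⁻¹' Iic 1 := by
    intro u hu
    simp only [mem_preimage, mem_Iic]
    exact (orderStat_mem_Icc u r hr1 hrN fun i => hu i (mem_univ i)).2
  have h1 : (1:ENNReal) ≤ unifPi N ((fun u : Fin N → ℝ => orderStat u r) ⁻¹' Iic 1) := by
    rw [← unifPi_goodSet N]; exact measure_mono hsub
  have h2 := prob_le_one (μ := unifPi N)
      (s := (fun u : Fin N → ℝ => orderStat u r) ⁻¹' Iic 1)
  rw [le_antisymm h2 h1]
  simp

theorem betaCDF_nonneg (N r : ℕ) (x : ℝ) : 0 ≤ betaCDF N r x := ENNReal.toReal_nonneg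

-- binomial identity

theorem sum_pow_card (m : ℕ) (a b : ℝ) :
    ∑ T : Finset (Fin m), a ^ T.card * b ^ (m - T.card) = (a + b) ^ m := by
  have h := Finset.prod_add (fun _ : Fin m => a) (fun _ : Fin m => b) Finset.univ
  rw [Finset.prod_const, Finset.card_univ, Fintype.card_fin] at h
  rw [h]
  apply Finset.sum_congr Finset.powerset_univ.symm
  intro T hT
  rw [Finset.prod_const, Finset.prod_const, Finset.card_sdiff_of_subset (Finset.mem_powerset.mp hT),
    Finset.card_univ, Fintype.card_fin]

theorem betaCDF_tail_bound (m k : ℕ) (hm : 1 ≤ m) (hk1 : 1 ≤ k) (hkm : k ≤ m) (x : ℝ)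
    (hx0 : 0 ≤ x) (hxq : x < (k:ℝ) / ((m:ℝ) + 1)) :
    betaCDF m k x ≤ Real.exp (-(2 * m * ((k:ℝ)/m - x)^2)) := by
  have hm0 : (0:ℝ) < m := by exact_mod_cast hm
  have hqp : (k:ℝ) / ((m:ℝ) + 1) ≤ (k:ℝ)/m := by
    apply div_le_div_of_nonneg_left (by positivity) hm0
    linarith
  have hx1 : x ≤ 1 := by
    have : (k:ℝ) / ((m:ℝ)+1) < 1 := by
      rw [div_lt_one (by linarith)]
      have : (k:ℝ) ≤ m := by exact_mod_cast hkm
      linarith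
    linarith
  set L : ℝ := 4 * ((k:ℝ)/m - x) with hL
  have hL0 : 0 ≤ L := by
    have : x < (k:ℝ)/m := lt_of_lt_of_le hxq hqp
    simp only [hL]; linarith
  rw [betaCDF_eq_sum m k hk1 hkm x hx0 hx1]
  have hexp : ∀ T : Finset (Fin m), k ≤ T.card →
      x ^ T.card * (1 - x) ^ (m - T.card)
      ≤ (x * Real.exp L) ^ T.card * (1 - x) ^ (m - T.card) * Real.exp (-(L * k)) := by
    intro T hc
    have hgE : (x * Real.exp L) ^ T.card * (1 - x) ^ (m - T.card) * Real.exp (-(L * k))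
        = x ^ T.card * (1 - x) ^ (m - T.card) * Real.exp ((T.card : ℝ) * L + -(L * k)) := by
      rw [mul_pow, ← Real.exp_nat_mul, Real.exp_add]; ring
    rw [hgE]
    apply le_mul_of_one_le_right
      (mul_nonneg (pow_nonneg hx0 _) (pow_nonneg (by linarith) _))
    apply Real.one_le_exp
    have hck : (k:ℝ) ≤ (T.card : ℝ) := by exact_mod_cast hc
    nlinarith
  have step1 : ∑ T ∈ (Finset.univ.filter fun T : Finset (Fin m) => k ≤ T.card),
        x ^ T.card * (1 - x) ^ (m - T.card)
      ≤ ∑ T : Finset (Fin m),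
        (x * Real.exp L) ^ T.card * (1 - x) ^ (m - T.card) * Real.exp (-(L * k)) := by
    calc ∑ T ∈ (Finset.univ.filter fun T : Finset (Fin m) => k ≤ T.card),
        x ^ T.card * (1 - x) ^ (m - T.card)
        ≤ ∑ T ∈ (Finset.univ.filter fun T : Finset (Fin m) => k ≤ T.card),
          (x * Real.exp L) ^ T.card * (1 - x) ^ (m - T.card) * Real.exp (-(L * k)) := by
          apply Finset.sum_le_sum
          intro T hT
          exact hexp T (Finset.mem_filter.mp hT).2
    _ ≤ ∑ T : Finset (Fin m),
          (x * Real.exp L) ^ T.card * (1 - x) ^ (m - T.card) * Real.exp (-(L * k)) := by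
          apply Finset.sum_le_sum_of_subset_of_nonneg (Finset.filter_subset _ _)
          intro T _ _
          apply mul_nonneg (mul_nonneg (pow_nonneg (by positivity) _)
            (pow_nonneg (by linarith) _)) (Real.exp_pos _).le
  have step2 : ∑ T : Finset (Fin m),
        (x * Real.exp L) ^ T.card * (1 - x) ^ (m - T.card) * Real.exp (-(L * k))
      = (x * Real.exp L + (1 - x)) ^ m * Real.exp (-(L * k)) := by
    rw [← Finset.sum_mul, sum_pow_card]
  have step3 : (x * Real.exp L + (1 - x)) ^ m * Real.exp (-(L * k))
      ≤ Real.exp (-(2 * m * ((k:ℝ)/m - x)^2)) := by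
    have hb : x * Real.exp L + (1 - x) ≤ Real.exp (x * L + L ^ 2 / 8) := by
      have := bernoulli_mgf_bound x L hx0 hx1 hL0
      linarith
    have hbn : (0:ℝ) ≤ x * Real.exp L + (1 - x) := by
      have := Real.exp_pos L
      nlinarith
    have hpow : (x * Real.exp L + (1 - x)) ^ m ≤ Real.exp ((m:ℝ) * (x * L + L ^ 2 / 8)) := by
      calc (x * Real.exp L + (1 - x)) ^ m ≤ (Real.exp (x * L + L ^ 2 / 8)) ^ m :=
        pow_le_pow_left₀ hbn hb m
      _ = Real.exp ((m:ℝ) * (x * L + L ^ 2 / 8)) := by rw [← Real.exp_nat_mul]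
    calc (x * Real.exp L + (1 - x)) ^ m * Real.exp (-(L * k))
        ≤ Real.exp ((m:ℝ) * (x * L + L ^ 2 / 8)) * Real.exp (-(L * k)) := by
          apply mul_le_mul_of_nonneg_right hpow (Real.exp_pos _).le
    _ = Real.exp ((m:ℝ) * (x * L + L ^ 2 / 8) + -(L * k)) := (Real.exp_add _ _).symm
    _ = Real.exp (-(2 * m * ((k:ℝ)/m - x)^2)) := by
        congr 1
        have hk : (k:ℝ) = (m:ℝ) * ((k:ℝ)/m) := by field_simp
        rw [hL]
        nlinarith [hk]
  linarith

theorem quantile_lb (m k : ℕ) (hm : 1 ≤ m) (hk1 : 1 ≤ k) (hkm : k ≤ m)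
    (β : ℝ) (hβ : β ∈ Ioo (0:ℝ) 1) :
    (k : ℝ) / ((m : ℝ) + 1) - Real.sqrt (Real.log (1/β) / (2 * ((m : ℝ) + 2)))
      ≤ betaQuantile m k β := by
  obtain ⟨hβ0, hβ1⟩ := hβ
  have hm0 : (0:ℝ) < m := by exact_mod_cast hm
  set q : ℝ := (k : ℝ) / ((m : ℝ) + 1) with hq
  set s : ℝ := Real.sqrt (Real.log (1/β) / (2 * ((m : ℝ) + 2))) with hs
  have hlog0 : 0 ≤ Real.log (1/β) := by
    rw [one_div, Real.log_inv]
    have := Real.log_nonpos hβ0.le hβ1.le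
    linarith
  have hs0 : 0 ≤ s := Real.sqrt_nonneg _
  have hssq : s ^ 2 = Real.log (1/β) / (2 * ((m:ℝ) + 2)) := by
    rw [hs, Real.sq_sqrt (by positivity)]
  apply le_csInf
  · exact ⟨1, by simp only [mem_setOf_eq, betaCDF_one m k hk1 hkm]; linarith⟩
  intro x hx
  simp only [mem_setOf_eq] at hx
  by_contra hcon
  push_neg at hcon
  -- x < q - s
  have hxq : x < q := by linarith
  have hx0 : 0 ≤ x := by
    by_contra hx0
    push_neg at hx0
    rw [betaCDF_neg m k hk1 hkm x hx0] at hx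
    linarith
  have htail := betaCDF_tail_bound m k hm hk1 hkm x hx0 hxq
  -- key algebraic comparison: m * (k/m - x)^2 ≥ (m+2) * (q - x)^2
  have hcomp : ((m:ℝ)+2) * (q - x)^2 ≤ (m:ℝ) * ((k:ℝ)/m - x)^2 := by
    have hqx : 0 < q - x := by linarith
    have h1 : ((m:ℝ)+1) * (q - x) ≤ (m:ℝ) * ((k:ℝ)/m - x) := by
      have e1 : (m:ℝ) * ((k:ℝ)/m) = k := by field_simp
      have e2 : ((m:ℝ)+1) * q = k := by rw [hq]; field_simp
      nlinarith
    have h2 : 0 ≤ ((m:ℝ)+1) * (q - x) := by positivity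
    nlinarith
  have hfin : Real.exp (-(2 * m * ((k:ℝ)/m - x)^2)) < β := by
    have h3 : Real.log (1/β) < 2 * ((m:ℝ)+2) * (q - x)^2 := by
      have : s < q - x := by linarith
      have h4 : s^2 < (q - x)^2 := by nlinarith
      rw [hssq] at h4
      rw [div_lt_iff₀ (by positivity)] at h4
      linarith [h4]
    have h5 : -(2 * (m:ℝ) * ((k:ℝ)/m - x)^2) < -Real.log (1/β) := by nlinarith
    calc Real.exp (-(2 * m * ((k:ℝ)/m - x)^2)) < Real.exp (-Real.log (1/β)) :=
      Real.exp_lt_exp.mpr h5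
    _ = β := by
        rw [one_div, Real.log_inv, neg_neg, Real.exp_log hβ0]
  linarith

/-- For `β ∈ (0,1)`, the `β`-quantile of the `k`-th order statistic of
`m` i.i.d. Beta(ℓ, n-ℓ+1) variables, `F_{U_(ℓ:n,k:m)}⁻¹(β) = F_{U_(ℓ:n)}⁻¹(F_{U_(k:m)}⁻¹(β))`,
is at least `F_{U_(ℓ:n)}⁻¹(k/(m+1) - √(log(1/β)/(2(m+2))))`. -/
theorem qq_quantile_lower_bound (n m : ℕ) (hn : 1 ≤ n) (hm : 1 ≤ m)
    (ℓ k : ℕ) (hℓ1 : 1 ≤ ℓ) (hℓn : ℓ ≤ n) (hk1 : 1 ≤ k) (hkm : k ≤ m)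
    (β : ℝ) (hβ : β ∈ Ioo (0:ℝ) 1) :
    betaQuantile n ℓ ((k : ℝ) / ((m : ℝ) + 1)
        - Real.sqrt (Real.log (1/β) / (2 * ((m : ℝ) + 2))))
      ≤ betaQuantile n ℓ (betaQuantile m k β) := by
  set p1 : ℝ := (k : ℝ) / ((m : ℝ) + 1)
      - Real.sqrt (Real.log (1/β) / (2 * ((m : ℝ) + 2))) with hp1
  set p2 : ℝ := betaQuantile m k β with hp2
  have hp12 : p1 ≤ p2 := quantile_lb m k hm hk1 hkm β hβ
  have hF1 : betaCDF n ℓ 1 = 1 := betaCDF_one n ℓ hℓ1 hℓn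
  have hSnonneg : ∀ p : ℝ, 0 < p → ∀ x ∈ {x | p ≤ betaCDF n ℓ x}, (0:ℝ) ≤ x := by
    intro p hp x hx
    simp only [mem_setOf_eq] at hx
    by_contra hx0
    push_neg at hx0
    rw [betaCDF_neg n ℓ hℓ1 hℓn x hx0] at hx
    linarith
  -- p2 bounds
  have hp2_0 : 0 ≤ p2 := by
    rw [hp2]
    apply le_csInf
    · exact ⟨1, by simp only [mem_setOf_eq, betaCDF_one m k hk1 hkm]; exact hβ.2.le⟩
    · intro x hx
      simp only [mem_setOf_eq] at hx
      by_contra hx0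
      push_neg at hx0
      rw [betaCDF_neg m k hk1 hkm x hx0] at hx
      linarith [hβ.1]
  have hp2_1 : p2 ≤ 1 := by
    rw [hp2]
    apply csInf_le
    · exact ⟨0, fun x hx => by
        simp only [mem_setOf_eq] at hx
        by_contra hx0
        push_neg at hx0
        rw [betaCDF_neg m k hk1 hkm x hx0] at hx
        linarith [hβ.1]⟩
    · simp only [mem_setOf_eq, betaCDF_one m k hk1 hkm]
      exact hβ.2.le
  have hRHS0 : 0 ≤ betaQuantile n ℓ p2 := by
    rcases eq_or_lt_of_le hp2_0 with h | h
    · have : {x | p2 ≤ betaCDF n ℓ x} = univ := by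
        ext x; simp only [mem_setOf_eq, mem_univ, iff_true, ← h]
        exact betaCDF_nonneg n ℓ x
      rw [show betaQuantile n ℓ p2 = sInf {x | p2 ≤ betaCDF n ℓ x} from rfl, this,
        Real.sInf_of_not_bddBelow (by simpa using not_bddBelow_univ)]
    · apply le_csInf
      · exact ⟨1, by simp only [mem_setOf_eq, hF1]; exact hp2_1⟩
      · exact hSnonneg p2 h
  rcases le_or_gt p1 0 with h1 | h1
  · -- LHS = 0
    have : {x | p1 ≤ betaCDF n ℓ x} = univ := by
      ext x; simp only [mem_setOf_eq, mem_univ, iff_true]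
      exact le_trans h1 (betaCDF_nonneg n ℓ x)
    rw [show betaQuantile n ℓ p1 = sInf {x | p1 ≤ betaCDF n ℓ x} from rfl, this,
      Real.sInf_of_not_bddBelow (by simpa using not_bddBelow_univ)]
    exact hRHS0
  · apply csInf_le_csInf
    · exact ⟨0, hSnonneg p1 h1⟩
    · exact ⟨1, by simp only [mem_setOf_eq, hF1]; exact hp2_1⟩
    · intro x hx
      simp only [mem_setOf_eq] at hx ⊢
      linarith
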